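/- arXiv:1607.06393 — 2 statements merged into one kernel-verified Lean document; each statement's English description precedes it below -/
import Mathlib

section
/- Let ℓ ≥ 3 be an integer. For every ε > 0 and every C > 0 there exists n_0 such that for every n ≥ n_0 there exists a simple graph G on n vertices containing no K_(2ℓ+1), with independence number α(G) ≤ n·2^(−C·(log n)^(ℓ/(ℓ+1))), and satisfying k_3(G) ≥ ((ℓ choose 3)/ℓ³ − ε)·n³. -/
open Finset

/-- `α(G) ≤ b`: every independent set of `G` has size at most `b`. -/
def indepLE {n : ℕ} (G : SimpleGraph (Fin n)) (b : ℝ) : Prop :=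
  ∀ S : Finset (Fin n), (∀ u ∈ S, ∀ v ∈ S, u ≠ v → ¬ G.Adj u v) → (S.card : ℝ) ≤ b

/-- `(G, φ)` contains a monochromatic `K_k`. -/
def HasMonoClique {n r : ℕ} (G : SimpleGraph (Fin n)) (φ : G.edgeSet → Fin r) (k : ℕ) : Prop :=
  ∃ (S : Finset (Fin n)) (c : Fin r), S.card = k ∧
    ∀ u ∈ S, ∀ v ∈ S, u ≠ v → ∃ h : G.Adj u v, φ ⟨s(u, v), h⟩ = c

/-- Number of `r`-edge-colorings of `G` with no monochromatic `K_k`. -/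
noncomputable def numColorings {n : ℕ} (G : SimpleGraph (Fin n)) (r k : ℕ) : ℕ :=
  Nat.card {φ : G.edgeSet → Fin r // ¬ HasMonoClique G φ k}

/-- `k_s(G)`: the number of copies of `K_s` in `G`. -/
noncomputable def cliqueCount {n : ℕ} (G : SimpleGraph (Fin n)) (s : ℕ) : ℕ :=
  Nat.card {S : Finset (Fin n) // G.IsNClique s S}

/-- `b_k` from Ramsey–Turán theory. -/
noncomputable def bconst (k : ℕ) : ℝ :=
  if Odd k then ((k : ℝ) - 3) / (2 * ((k : ℝ) - 1))
  else (3 * (k : ℝ) - 10) / (2 * (3 * (k : ℝ) - 4))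

/-- `a_ℓ` in the even case: maximum over `x ∈ [0,1]`. -/
noncomputable def aEven (ℓ : ℕ) : ℝ :=
  sSup ((fun x : ℝ =>
    ((ℓ - 2).choose 3 : ℝ) * ((1 - x) / ((ℓ : ℝ) - 2)) ^ 3 +
    x * ((ℓ - 2).choose 2 : ℝ) * ((1 - x) / ((ℓ : ℝ) - 2)) ^ 2 +
    (1 / 2) * (x / 2) ^ 2 * (1 - x)) '' Set.Icc (0 : ℝ) 1)

namespace RT16

open Filter

lemma card_filter_forall_mem {n k : ℕ} (s : Finset (Sym2 (Fin n))) (A : Finset (Fin k)) :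
    ((univ : Finset (Sym2 (Fin n) → Fin k)).filter (fun f => ∀ x ∈ s, f x ∈ A)).card
      = A.card ^ s.card * k ^ (Fintype.card (Sym2 (Fin n)) - s.card) := by
  classical
  have h : (univ : Finset (Sym2 (Fin n) → Fin k)).filter (fun f => ∀ x ∈ s, f x ∈ A)
      = Fintype.piFinset (fun x => if x ∈ s then A else univ) := by
    ext f
    simp only [mem_filter, mem_univ, true_and, Fintype.mem_piFinset]
    constructor
    · intro h x
      by_cases hx : x ∈ s <;> simp [hx, h x]
    · intro h x hx
      have := h x
      simpa [hx] using this
  rw [h, Fintype.card_piFinset]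
  rw [← Finset.prod_sdiff (Finset.subset_univ s)]
  have h1 : ∏ x ∈ s, (if x ∈ s then A else univ).card = ∏ _x ∈ s, A.card :=
    Finset.prod_congr rfl (fun x hx => by simp [hx])
  have h2 : ∏ x ∈ univ \ s, (if x ∈ s then A else univ).card
      = ∏ _x ∈ univ \ s, ((univ : Finset (Fin k))).card :=
    Finset.prod_congr rfl (fun x hx => by simp [(Finset.mem_sdiff.mp hx).2])
  rw [h1, h2, Finset.prod_const, Finset.prod_const,
    Finset.card_sdiff_of_subset (Finset.subset_univ s), Finset.card_univ, Finset.card_univ,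
    Fintype.card_fin, mul_comm]

lemma sp_card {n : ℕ} {u v w : Fin n} (h1 : u < v) (h2 : v < w) :
    ({s(u,v), s(u,w), s(v,w)} : Finset (Sym2 (Fin n))).card = 3 := by
  have h3 : u < w := h1.trans h2
  rw [card_insert_of_notMem, card_insert_of_notMem, card_singleton] <;>
    simp [Sym2.eq_iff, h1.ne, h2.ne, h3.ne, h1.ne', h2.ne', h3.ne']

def triples (n : ℕ) : Finset (Fin n × Fin n × Fin n) :=
  univ.filter (fun p => p.1 < p.2.1 ∧ p.2.1 < p.2.2)

def Tcount {n k : ℕ} [NeZero k] (f : Sym2 (Fin n) → Fin k) : ℕ :=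
  ((triples n).filter (fun p =>
    f s(p.1, p.2.1) = 0 ∧ f s(p.1, p.2.2) = 0 ∧ f s(p.2.1, p.2.2) = 0)).card

lemma sum_Tcount {n k : ℕ} [NeZero k] :
    ∑ f : Sym2 (Fin n) → Fin k, Tcount f ≤ n^3 * k^(Fintype.card (Sym2 (Fin n)) - 3) := by
  classical
  have step1 : ∑ f : Sym2 (Fin n) → Fin k, Tcount f
      = ∑ p ∈ triples n, ((univ : Finset (Sym2 (Fin n) → Fin k)).filter (fun f =>
          f s(p.1, p.2.1) = 0 ∧ f s(p.1, p.2.2) = 0 ∧ f s(p.2.1, p.2.2) = 0)).card := by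
    simp only [Tcount, Finset.card_filter]
    rw [Finset.sum_comm]
  rw [step1]
  have step2 : ∀ p ∈ triples n,
      ((univ : Finset (Sym2 (Fin n) → Fin k)).filter (fun f =>
          f s(p.1, p.2.1) = 0 ∧ f s(p.1, p.2.2) = 0 ∧ f s(p.2.1, p.2.2) = 0)).card
        = k ^ (Fintype.card (Sym2 (Fin n)) - 3) := by
    intro p hp
    obtain ⟨h1, h2⟩ := (mem_filter.mp hp).2
    have hset : (univ : Finset (Sym2 (Fin n) → Fin k)).filter (fun f =>
          f s(p.1, p.2.1) = 0 ∧ f s(p.1, p.2.2) = 0 ∧ f s(p.2.1, p.2.2) = 0)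
        = (univ : Finset (Sym2 (Fin n) → Fin k)).filter (fun f =>
          ∀ x ∈ ({s(p.1,p.2.1), s(p.1,p.2.2), s(p.2.1,p.2.2)} : Finset (Sym2 (Fin n))),
            f x ∈ ({0} : Finset (Fin k))) := by
      ext f
      simp only [mem_filter, mem_univ, true_and, Finset.mem_insert, Finset.mem_singleton]
      constructor
      · rintro ⟨a, b, c⟩ x (rfl | rfl | rfl) <;> simpa
      · intro h
        exact ⟨by simpa using h _ (Or.inl rfl), by simpa using h _ (Or.inr (Or.inl rfl)),
          by simpa using h _ (Or.inr (Or.inr rfl))⟩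
    rw [hset, card_filter_forall_mem, sp_card h1 h2]
    simp
  rw [Finset.sum_congr rfl step2, Finset.sum_const, smul_eq_mul]
  apply Nat.mul_le_mul_right
  calc (triples n).card ≤ (univ : Finset (Fin n × Fin n × Fin n)).card :=
        card_le_card (filter_subset _ _)
    _ = n ^ 3 := by simp [card_univ]; ring

noncomputable def kk (n : ℕ) : ℕ := ⌈((4:ℝ) * (n:ℝ) ^ 2) ^ ((1:ℝ)/3)⌉₊
noncomputable def tt (n : ℕ) : ℕ := 2 * kk n * (⌈Real.log n⌉₊ + 2) + 2

lemma kk_pos {n : ℕ} (hn : 1 ≤ n) : 0 < kk n := by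
  rw [kk]
  rw [Nat.ceil_pos]
  apply Real.rpow_pos_of_pos
  have : (1:ℝ) ≤ (n:ℝ) := by exact_mod_cast hn
  nlinarith

lemma kk_cube {n : ℕ} : 4 * (n:ℝ)^2 ≤ (kk n : ℝ)^3 := by
  have h0 : (0:ℝ) ≤ 4 * (n:ℝ)^2 := by positivity
  have h1 : ((4:ℝ) * (n:ℝ) ^ 2) ^ ((1:ℝ)/3) ≤ (kk n : ℝ) := Nat.le_ceil _
  have h2 : (((4:ℝ) * (n:ℝ) ^ 2) ^ ((1:ℝ)/3))^(3:ℕ) ≤ (kk n : ℝ)^(3:ℕ) :=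
    pow_le_pow_left₀ (Real.rpow_nonneg h0 _) h1 3
  calc 4 * (n:ℝ)^2 = (((4:ℝ) * (n:ℝ) ^ 2) ^ ((1:ℝ)/3))^(3:ℕ) := by
        rw [← Real.rpow_natCast (((4:ℝ) * (n:ℝ) ^ 2) ^ ((1:ℝ)/3)) 3, ← Real.rpow_mul h0]
        norm_num
    _ ≤ (kk n : ℝ)^3 := h2

lemma kk_le {n : ℕ} (hn : 1 ≤ n) : (kk n : ℝ) ≤ 2 * (n:ℝ)^((2:ℝ)/3) + 1 := by
  have hn1 : (1:ℝ) ≤ (n:ℝ) := by exact_mod_cast hn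
  have h0 : (0:ℝ) ≤ 4 * (n:ℝ)^2 := by positivity
  have h1 : (kk n : ℝ) < ((4:ℝ) * (n:ℝ) ^ 2) ^ ((1:ℝ)/3) + 1 :=
    Nat.ceil_lt_add_one (Real.rpow_nonneg h0 _)
  have h2 : ((4:ℝ) * (n:ℝ) ^ 2) ^ ((1:ℝ)/3) ≤ 2 * (n:ℝ)^((2:ℝ)/3) := by
    have e1 : ((4:ℝ) * (n:ℝ) ^ 2) ^ ((1:ℝ)/3)
        = (4:ℝ)^((1:ℝ)/3) * ((n:ℝ)^2)^((1:ℝ)/3) := by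
      rw [Real.mul_rpow (by norm_num) (by positivity)]
    have e2 : ((n:ℝ)^2)^((1:ℝ)/3) = (n:ℝ)^((2:ℝ)/3) := by
      rw [← Real.rpow_natCast (n:ℝ) 2, ← Real.rpow_mul (by positivity)]
      norm_num
    have e3 : (4:ℝ)^((1:ℝ)/3) ≤ 2 := by
      have : (4:ℝ) = (2:ℝ)^(2:ℕ) := by norm_num
      rw [this, ← Real.rpow_natCast (2:ℝ) 2, ← Real.rpow_mul (by norm_num)]
      calc (2:ℝ) ^ ((2:ℕ) * ((1:ℝ)/3)) ≤ (2:ℝ)^(1:ℝ) :=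
            Real.rpow_le_rpow_of_exponent_le (by norm_num) (by push_cast; norm_num)
        _ = 2 := Real.rpow_one 2
      
    rw [e1, e2]
    have : (0:ℝ) ≤ (n:ℝ)^((2:ℝ)/3) := by positivity
    nlinarith
  linarith

lemma tt_bound {n : ℕ} (hn : 3 ≤ n) : (tt n : ℝ) ≤ 26 * (n:ℝ)^((2:ℝ)/3) * Real.log n := by
  have hn1 : (1:ℝ) ≤ (n:ℝ) := by exact_mod_cast hn.trans' (by norm_num)
  have hn3 : (3:ℝ) ≤ (n:ℝ) := by exact_mod_cast hn
  have hlog1 : (1:ℝ) ≤ Real.log n := by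
    calc (1:ℝ) ≤ Real.log (Real.exp 1) := by rw [Real.log_exp]
      _ ≤ Real.log n := Real.log_le_log (Real.exp_pos 1) (by
          have := Real.exp_one_lt_d9
          nlinarith)
  have hlogpos : (0:ℝ) ≤ Real.log n := by linarith
  have hL : (⌈Real.log n⌉₊ : ℝ) ≤ Real.log n + 1 := (Nat.ceil_lt_add_one hlogpos).le
  have hrp1 : (1:ℝ) ≤ (n:ℝ)^((2:ℝ)/3) := Real.one_le_rpow hn1 (by norm_num)
  have hkk : (kk n : ℝ) ≤ 3 * (n:ℝ)^((2:ℝ)/3) := by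
    have := kk_le (by omega : 1 ≤ n)
    linarith
  have hcast : (tt n : ℝ) = 2 * (kk n : ℝ) * ((⌈Real.log n⌉₊ : ℝ) + 2) + 2 := by
    rw [tt]; push_cast; ring
  have hkk0 : (0:ℝ) ≤ (kk n:ℝ) := by positivity
  calc (tt n : ℝ) = 2 * (kk n : ℝ) * ((⌈Real.log n⌉₊ : ℝ) + 2) + 2 := hcast
    _ ≤ 2 * (3 * (n:ℝ)^((2:ℝ)/3)) * (Real.log n + 3) + 2 := by nlinarith
    _ ≤ 26 * (n:ℝ)^((2:ℝ)/3) * Real.log n := by nlinarith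

lemma h2_holds {n : ℕ} (hn : 1 ≤ n) :
    (n:ℝ) ^ (tt n) * (((kk n:ℝ) - 1)/(kk n)) ^ ((tt n).choose 2) ≤ 1/4 := by
  set K := (kk n : ℝ) with hK
  set t := tt n with htdef
  have hK1 : (1:ℝ) ≤ K := by
    have h := kk_pos hn
    rw [hK]
    exact_mod_cast h
  have hKpos : (0:ℝ) < K := by linarith
  have hnpos : (0:ℝ) < (n:ℝ) := by exact_mod_cast hn
  have hlogn : (0:ℝ) ≤ Real.log n := Real.log_nonneg (by exact_mod_cast hn)
  have hL : Real.log n ≤ (⌈Real.log n⌉₊ : ℝ) := Nat.le_ceil _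
  -- base bound
  have hbase0 : (0:ℝ) ≤ (K - 1)/K := div_nonneg (by linarith) hKpos.le
  have hbase : (K - 1)/K ≤ Real.exp (-(1/K)) := by
    have h := Real.add_one_le_exp (-(1/K))
    have : (K-1)/K = 1 - 1/K := by field_simp
    rw [this]
    linarith
  have hpow : ((K - 1)/K) ^ (t.choose 2) ≤ Real.exp (-(1/K)) ^ (t.choose 2) :=
    pow_le_pow_left₀ hbase0 hbase _
  have hexp1 : Real.exp (-(1/K)) ^ (t.choose 2) = Real.exp ((t.choose 2 : ℝ) * (-(1/K))) :=
    (Real.exp_nat_mul _ _).symm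
  have hexp2 : (n:ℝ) ^ t = Real.exp ((t:ℝ) * Real.log n) := by
    rw [← Real.exp_log hnpos, ← Real.exp_nat_mul, Real.exp_log hnpos]
  -- arithmetic on the exponent
  have hchoose : ((t.choose 2 : ℕ) : ℝ) = (t:ℝ) * ((t:ℝ) - 1) / 2 := Nat.cast_choose_two (K := ℝ) t
  have htval : (t:ℝ) = 2 * K * ((⌈Real.log n⌉₊ : ℝ) + 2) + 2 := by
    rw [htdef, tt]; push_cast; ring
  have ht2 : (2:ℝ) ≤ (t:ℝ) := by nlinarith [(Nat.cast_nonneg ⌈Real.log n⌉₊ : (0:ℝ) ≤ (⌈Real.log n⌉₊:ℝ))]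
  have hkey : (t:ℝ) * Real.log n + (t.choose 2 : ℝ) * (-(1/K)) ≤ -2 := by
    rw [hchoose]
    have hstep : Real.log n + 2 ≤ ((t:ℝ) - 1) / (2 * K) := by
      rw [le_div_iff₀ (by linarith)]
      nlinarith
    have hrw : (t:ℝ) * ((t:ℝ) - 1) / 2 * (-(1/K)) = -((t:ℝ) * (((t:ℝ) - 1)/(2*K))) := by
      field_simp
      try ring
    rw [hrw]
    have hstep2 : (t:ℝ) * (Real.log n + 2) ≤ (t:ℝ) * (((t:ℝ)-1)/(2*K)) :=
      mul_le_mul_of_nonneg_left hstep (by linarith)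
    nlinarith
  have hexp4 : Real.exp (-2 : ℝ) ≤ 1/4 := by
    rw [Real.exp_neg]
    rw [inv_le_comm₀ (Real.exp_pos 2) (by norm_num)]
    have h1 : Real.exp 2 = Real.exp 1 * Real.exp 1 := by
      rw [← Real.exp_add]; norm_num
    have h2 := Real.exp_one_gt_d9
    rw [h1]
    nlinarith
  calc (n:ℝ) ^ t * ((K - 1)/K) ^ (t.choose 2)
      ≤ Real.exp ((t:ℝ) * Real.log n) * Real.exp ((t.choose 2 : ℝ) * (-(1/K))) := by
        rw [← hexp2, ← hexp1]
        exact mul_le_mul_of_nonneg_left hpow (by positivity)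
    _ = Real.exp ((t:ℝ) * Real.log n + (t.choose 2 : ℝ) * (-(1/K))) := (Real.exp_add _ _).symm
    _ ≤ Real.exp (-2) := Real.exp_le_exp.mpr hkey
    _ ≤ 1/4 := hexp4

lemma ev_tt : ∀ᶠ n : ℕ in atTop, (tt n : ℝ) ≤ (n:ℝ)^((3:ℝ)/4) := by
  have hlo := isLittleO_log_rpow_atTop (by norm_num : (0:ℝ) < 1/12)
  have hev : ∀ᶠ x : ℝ in atTop, ‖Real.log x‖ ≤ (1/26) * ‖x^((1:ℝ)/12)‖ :=
    hlo.def (by norm_num)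
  have hevn : ∀ᶠ n : ℕ in atTop, ‖Real.log (n:ℝ)‖ ≤ (1/26) * ‖(n:ℝ)^((1:ℝ)/12)‖ :=
    tendsto_natCast_atTop_atTop.eventually hev
  filter_upwards [hevn, eventually_ge_atTop 3] with n hlog hn3
  have hn1 : (1:ℝ) ≤ (n:ℝ) := by exact_mod_cast (by omega : 1 ≤ n)
  have hnpos : (0:ℝ) < (n:ℝ) := by linarith
  have hlognn : 0 ≤ Real.log n := Real.log_nonneg hn1
  have hrpnn : (0:ℝ) ≤ (n:ℝ)^((1:ℝ)/12) := Real.rpow_nonneg hnpos.le _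
  rw [Real.norm_of_nonneg hlognn, Real.norm_of_nonneg hrpnn] at hlog
  have h1 := tt_bound hn3
  have h23 : (0:ℝ) ≤ (n:ℝ)^((2:ℝ)/3) := Real.rpow_nonneg hnpos.le _
  calc (tt n : ℝ) ≤ 26 * (n:ℝ)^((2:ℝ)/3) * Real.log n := h1
    _ ≤ 26 * (n:ℝ)^((2:ℝ)/3) * ((1/26) * (n:ℝ)^((1:ℝ)/12)) := by
        apply mul_le_mul_of_nonneg_left hlog (by positivity)
    _ = (n:ℝ)^((2:ℝ)/3) * (n:ℝ)^((1:ℝ)/12) := by ring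
    _ = (n:ℝ)^((3:ℝ)/4) := by
        rw [← Real.rpow_add hnpos]; norm_num

lemma ev_indep (ℓ : ℕ) (hl : 3 ≤ ℓ) (C : ℝ) (hC : 0 < C) :
    ∀ᶠ n : ℕ in atTop, (n:ℝ)^((3:ℝ)/4)
      ≤ (n:ℝ) * (2:ℝ) ^ (-(C * Real.logb 2 n ^ ((ℓ:ℝ)/((ℓ:ℝ)+1)))) := by
  set γ := (ℓ:ℝ)/((ℓ:ℝ)+1) with hγ
  have hl0 : (0:ℝ) < (ℓ:ℝ) := by exact_mod_cast (by omega : 0 < ℓ)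
  have hγ0 : 0 < γ := by positivity
  have hγ1 : γ < 1 := by
    rw [hγ, div_lt_one (by linarith)]; linarith
  have hδ : 0 < 1 - γ := by linarith
  have htend : Tendsto (fun n : ℕ => (Real.logb 2 n)^(1 - γ)) atTop atTop :=
    (tendsto_rpow_atTop hδ).comp
      ((Real.tendsto_logb_atTop (by norm_num : (1:ℝ) < 2)).comp tendsto_natCast_atTop_atTop)
  filter_upwards [htend.eventually_ge_atTop (4*C), eventually_ge_atTop 2] with n hge hn2
  set y := Real.logb 2 (n:ℝ) with hy
  have hnpos : (0:ℝ) < (n:ℝ) := by exact_mod_cast (by omega : 0 < n)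
  have hn1 : (1:ℝ) ≤ (n:ℝ) := by exact_mod_cast (by omega : 1 ≤ n)
  have hy1 : (1:ℝ) ≤ y := by
    rw [hy, Real.le_logb_iff_rpow_le (by norm_num) hnpos]
    simpa using (by exact_mod_cast hn2 : (2:ℝ) ≤ (n:ℝ))
  have hypos : (0:ℝ) < y := by linarith
  have hyγnn : (0:ℝ) ≤ y ^ γ := Real.rpow_nonneg hypos.le _
  have hkey : C * y ^ γ ≤ (1/4) * y := by
    have hsplit : y ^ γ * y ^ (1 - γ) = y := by
      rw [← Real.rpow_add hypos]; norm_num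
    have h4 : 4 * C * y ^ γ ≤ y ^ (1-γ) * y ^ γ :=
      by
        have := mul_le_mul_of_nonneg_right hge hyγnn
        linarith [this]
    nlinarith [hsplit]
  have h2x : (2:ℝ) ^ (C * y ^ γ) ≤ (n:ℝ) ^ ((1:ℝ)/4) := by
    calc (2:ℝ) ^ (C * y ^ γ) ≤ (2:ℝ) ^ (y * (1/4)) := by
          apply Real.rpow_le_rpow_of_exponent_le (by norm_num)
          linarith
      _ = ((2:ℝ) ^ y) ^ ((1:ℝ)/4) := by rw [Real.rpow_mul (by norm_num)]
      _ = (n:ℝ) ^ ((1:ℝ)/4) := by rw [hy, Real.rpow_logb (by norm_num) (by norm_num) hnpos]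
  have h2xpos : (0:ℝ) < (2:ℝ) ^ (C * y ^ γ) := Real.rpow_pos_of_pos (by norm_num) _
  have hmain : (n:ℝ)^((3:ℝ)/4) * (2:ℝ)^(C * y ^ γ) ≤ (n:ℝ) := by
    calc (n:ℝ)^((3:ℝ)/4) * (2:ℝ)^(C * y ^ γ) ≤ (n:ℝ)^((3:ℝ)/4) * (n:ℝ)^((1:ℝ)/4) :=
          mul_le_mul_of_nonneg_left h2x (Real.rpow_nonneg hnpos.le _)
      _ = (n:ℝ) := by rw [← Real.rpow_add hnpos]; norm_num
  rw [Real.rpow_neg (by norm_num : (0:ℝ) ≤ 2), ← div_eq_mul_inv, le_div_iff₀ h2xpos]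
  exact hmain

theorem exists_good (n k t : ℕ) [NeZero k] (hn : 3 ≤ n) (htn : t ≤ n)
    (h1 : 4 * (n:ℝ)^2 ≤ (k:ℝ)^3)
    (h2 : (n:ℝ) ^ t * (((k:ℝ) - 1)/k) ^ (t.choose 2) ≤ 1/4) :
    ∃ f : Sym2 (Fin n) → Fin k,
      2 * Tcount f ≤ n ∧
      ∀ S : Finset (Fin n), S.card = t →
        ∃ u ∈ S, ∃ v ∈ S, u ≠ v ∧ f s(u,v) = 0 := by
  classical
  set N := Fintype.card (Sym2 (Fin n)) with hNdef
  have hk : 1 ≤ k := Nat.one_le_iff_ne_zero.mpr (NeZero.ne k)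
  have hNval : N = (n+1).choose 2 := by
    rw [hNdef, Sym2.card, Fintype.card_fin]
  have h3N : 3 ≤ N := by
    rw [hNval]
    calc 3 ≤ (4).choose 2 := by decide
      _ ≤ (n+1).choose 2 := Nat.choose_le_choose 2 (by omega)
  have hEN : t.choose 2 ≤ N := hNval ▸ Nat.choose_le_choose 2 (by omega)
  set E := t.choose 2 with hEdef
  set Bad1 := (univ : Finset (Sym2 (Fin n) → Fin k)).filter (fun f => n < 2 * Tcount f) with hB1
  set Bad2 := (univ : Finset (Sym2 (Fin n) → Fin k)).filter (fun f =>
    ∃ S : Finset (Fin n), S.card = t ∧ ∀ u ∈ S, ∀ v ∈ S, u ≠ v → f s(u,v) ≠ 0) with hB2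
  -- Bad1 bound in ℕ
  have b1 : (n+1) * Bad1.card ≤ 2 * (n^3 * k^(N-3)) := by
    calc (n+1) * Bad1.card = ∑ _f ∈ Bad1, (n+1) := by rw [Finset.sum_const, smul_eq_mul, mul_comm]
      _ ≤ ∑ f ∈ Bad1, 2 * Tcount f := Finset.sum_le_sum (fun f hf => (mem_filter.mp hf).2)
      _ ≤ ∑ f : Sym2 (Fin n) → Fin k, 2 * Tcount f :=
          Finset.sum_le_sum_of_subset (subset_univ _)
      _ = 2 * ∑ f : Sym2 (Fin n) → Fin k, Tcount f := by rw [Finset.mul_sum]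
      _ ≤ 2 * (n^3 * k^(N-3)) := Nat.mul_le_mul_left 2 sum_Tcount
  -- Bad2 bound in ℕ
  have b2 : Bad2.card ≤ n.choose t * ((k-1)^E * k^(N-E)) := by
    have hsub : Bad2 ⊆ (powersetCard t (univ : Finset (Fin n))).biUnion
        (fun S => univ.filter (fun f : Sym2 (Fin n) → Fin k =>
          ∀ x ∈ S.offDiag.image Sym2.mk.uncurry, f x ∈ (univ : Finset (Fin k)).erase 0)) := by
      intro f hf
      obtain ⟨S, hScard, hS⟩ := (mem_filter.mp hf).2
      refine mem_biUnion.mpr ⟨S, mem_powersetCard.mpr ⟨subset_univ S, hScard⟩, ?_⟩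
      refine mem_filter.mpr ⟨mem_univ _, ?_⟩
      intro x hx
      obtain ⟨p, hp, rfl⟩ := mem_image.mp hx
      obtain ⟨hp1, hp2, hne⟩ := mem_offDiag.mp hp
      exact mem_erase.mpr ⟨hS _ hp1 _ hp2 hne, mem_univ _⟩
    calc Bad2.card ≤ ∑ S ∈ powersetCard t (univ : Finset (Fin n)),
          (univ.filter (fun f : Sym2 (Fin n) → Fin k =>
            ∀ x ∈ S.offDiag.image Sym2.mk.uncurry, f x ∈ (univ : Finset (Fin k)).erase 0)).card :=
        (card_le_card hsub).trans card_biUnion_le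
      _ = ∑ _S ∈ powersetCard t (univ : Finset (Fin n)), ((k-1)^E * k^(N-E)) := by
          refine Finset.sum_congr rfl (fun S hS => ?_)
          rw [card_filter_forall_mem, Sym2.card_image_offDiag, (mem_powersetCard.mp hS).2]
          congr 2
          · rw [card_erase_of_mem (mem_univ _), card_univ, Fintype.card_fin]
      _ = n.choose t * ((k-1)^E * k^(N-E)) := by
          rw [Finset.sum_const, smul_eq_mul, card_powersetCard, card_univ, Fintype.card_fin]
  -- real versions
  have hkR : (1:ℝ) ≤ (k:ℝ) := by exact_mod_cast hk
  have hkpos : (0:ℝ) < (k:ℝ) := by linarith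
  have hpowN : (0:ℝ) < (k:ℝ)^N := pow_pos hkpos N
  have hsplit3 : (k:ℝ)^(N-3) * (k:ℝ)^3 = (k:ℝ)^N := by
    rw [← pow_add]; congr 1; omega
  have hsplitE : (k:ℝ)^(N-E) * (k:ℝ)^E = (k:ℝ)^N := by
    rw [← pow_add]; congr 1; omega
  have hb1R : (Bad1.card : ℝ) ≤ (1/2) * (k:ℝ)^N := by
    have c1 : ((n:ℝ)+1) * Bad1.card ≤ 2 * ((n:ℝ)^3 * (k:ℝ)^(N-3)) := by exact_mod_cast b1
    have c2 : (n:ℝ)^3 ≤ (n:ℝ)^2 * ((n:ℝ)+1) := by nlinarith [sq_nonneg (n:ℝ), (Nat.cast_nonneg n : (0:ℝ) ≤ (n:ℝ))]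
    have hn1 : (0:ℝ) < (n:ℝ)+1 := by positivity
    have hp3 : (0:ℝ) ≤ (k:ℝ)^(N-3) := by positivity
    -- Bad1.card ≤ 2 * n^2 * k^(N-3)
    have c3 : (Bad1.card : ℝ) ≤ 2 * (n:ℝ)^2 * (k:ℝ)^(N-3) := by
      rw [← mul_le_mul_iff_right₀ hn1]
      calc ((n:ℝ)+1) * Bad1.card ≤ 2 * ((n:ℝ)^3 * (k:ℝ)^(N-3)) := c1
        _ ≤ ((n:ℝ)+1) * (2 * (n:ℝ)^2 * (k:ℝ)^(N-3)) := by nlinarith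
    calc (Bad1.card : ℝ) ≤ 2 * (n:ℝ)^2 * (k:ℝ)^(N-3) := c3
      _ ≤ (1/2) * (k:ℝ)^3 * (k:ℝ)^(N-3) := by nlinarith
      _ = (1/2) * (k:ℝ)^N := by rw [mul_assoc, mul_comm ((k:ℝ)^3), hsplit3]
  have hb2R : (Bad2.card : ℝ) ≤ (1/4) * (k:ℝ)^N := by
    have c1 : (Bad2.card : ℝ) ≤ (n.choose t : ℝ) * (((k:ℝ)-1)^E * (k:ℝ)^(N-E)) := by
      have := b2
      have hcast : ((k-1:ℕ):ℝ) = (k:ℝ) - 1 := by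
        rw [Nat.cast_sub hk]; norm_num
      exact_mod_cast hcast ▸ (by exact_mod_cast b2 : (Bad2.card:ℝ) ≤ (n.choose t : ℝ) * (((k-1:ℕ):ℝ)^E * (k:ℝ)^(N-E)))
    have c2 : (n.choose t : ℝ) ≤ (n:ℝ)^t := by exact_mod_cast Nat.choose_le_pow n t
    have c3 : ((k:ℝ)-1)^E * (k:ℝ)^(N-E) = (((k:ℝ)-1)/k)^E * (k:ℝ)^N := by
      rw [div_pow, div_mul_eq_mul_div, mul_comm, ← hsplitE]
      field_simp
    have hnn : (0:ℝ) ≤ (((k:ℝ)-1)/k)^E * (k:ℝ)^N :=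
      mul_nonneg (pow_nonneg (div_nonneg (by linarith) hkpos.le) E) hpowN.le
    calc (Bad2.card : ℝ) ≤ (n.choose t : ℝ) * (((k:ℝ)-1)^E * (k:ℝ)^(N-E)) := c1
      _ = (n.choose t : ℝ) * ((((k:ℝ)-1)/k)^E * (k:ℝ)^N) := by rw [c3]
      _ ≤ (n:ℝ)^t * ((((k:ℝ)-1)/k)^E * (k:ℝ)^N) := by
          apply mul_le_mul_of_nonneg_right c2 hnn
      _ = ((n:ℝ)^t * (((k:ℝ)-1)/k)^E) * (k:ℝ)^N := by ring
      _ ≤ (1/4) * (k:ℝ)^N := mul_le_mul_of_nonneg_right h2 hpowN.le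
  have hcardU : (Fintype.card (Sym2 (Fin n) → Fin k)) = k ^ N := by
    rw [Fintype.card_fun, Fintype.card_fin]
  have hlt : (Bad1 ∪ Bad2).card < Fintype.card (Sym2 (Fin n) → Fin k) := by
    have : ((Bad1 ∪ Bad2).card : ℝ) < (k:ℝ)^N := by
      calc ((Bad1 ∪ Bad2).card : ℝ) ≤ (Bad1.card : ℝ) + (Bad2.card : ℝ) := by
            exact_mod_cast card_union_le Bad1 Bad2
        _ ≤ (1/2) * (k:ℝ)^N + (1/4) * (k:ℝ)^N := add_le_add hb1R hb2R
        _ < (k:ℝ)^N := by linarith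
    rw [hcardU]
    exact_mod_cast this
  obtain ⟨f, hf⟩ : ∃ f : Sym2 (Fin n) → Fin k, f ∉ Bad1 ∪ Bad2 := by
    by_contra h
    push_neg at h
    have : (univ : Finset (Sym2 (Fin n) → Fin k)) ⊆ Bad1 ∪ Bad2 := fun f _ => h f
    have := card_le_card this
    rw [card_univ] at this
    omega
  rw [mem_union] at hf
  push_neg at hf
  obtain ⟨hf1, hf2⟩ := hf
  refine ⟨f, ?_, ?_⟩
  · have := hf1
    rw [hB1, mem_filter] at this
    push_neg at this
    exact this (mem_univ f)
  · intro S hScard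
    rw [hB2, mem_filter] at hf2
    push_neg at hf2
    obtain ⟨u, hu, v, hv, huv, h0⟩ := hf2 (mem_univ f) S hScard
    exact ⟨u, hu, v, hv, huv, h0⟩

theorem build (ℓ n k t : ℕ) [NeZero k] (hl : 3 ≤ ℓ) (hn : 6 ≤ n)
    (f : Sym2 (Fin n) → Fin k) (hT : 2 * Tcount f ≤ n)
    (hf : ∀ S : Finset (Fin n), S.card = t → ∃ u ∈ S, ∃ v ∈ S, u ≠ v ∧ f s(u,v) = 0) :
    ∃ G : SimpleGraph (Fin n),
      G.CliqueFree (2 * ℓ + 1) ∧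
      (∀ S : Finset (Fin n), (∀ u ∈ S, ∀ v ∈ S, u ≠ v → ¬ G.Adj u v) → S.card ≤ t) ∧
      ℓ.choose 3 * (n / ℓ) ^ 3 ≤ cliqueCount G 3 := by
  classical
  set B := ((triples n).filter (fun p =>
    f s(p.1, p.2.1) = 0 ∧ f s(p.1, p.2.2) = 0 ∧ f s(p.2.1, p.2.2) = 0)).image
      (fun p => p.1) with hBdef
  set W := (univ : Finset (Fin n)) \ B with hWdef
  have hBcard : B.card ≤ Tcount f := card_image_le
  have hWcard : n / ℓ + 1 ≤ W.card := by
    have h1 : W.card = n - B.card := by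
      rw [hWdef, card_sdiff_of_subset (subset_univ _), card_univ, Fintype.card_fin]
    have h2 : n / ℓ ≤ n / 3 := Nat.div_le_div_left hl (by norm_num)
    omega
  have hvlt : ∀ v : Fin n, v.val / ℓ < W.card := by
    intro v
    have h1 : v.val / ℓ ≤ n / ℓ := Nat.div_le_div_right v.isLt.le
    omega
  set e : Fin n → Fin n := fun v => W.orderEmbOfFin rfl ⟨v.val / ℓ, hvlt v⟩ with hedef
  have heW : ∀ v, e v ∈ W := fun v => W.orderEmbOfFin_mem rfl _
  have heInj : ∀ u v : Fin n, u.val % ℓ = v.val % ℓ → e u = e v → u = v := by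
    intro u v h he
    have h2 : u.val / ℓ = v.val / ℓ :=
      congrArg Fin.val ((W.orderEmbOfFin rfl).injective he)
    have h4 := Nat.div_add_mod u.val ℓ
    have h5 := Nat.div_add_mod v.val ℓ
    apply Fin.ext
    rw [← h4, ← h5, h2, h]
  set G : SimpleGraph (Fin n) := {
    Adj := fun u v => u ≠ v ∧ (u.val % ℓ ≠ v.val % ℓ ∨ f s(e u, e v) = 0)
    symm := ⟨by
      rintro u v ⟨h1, h2⟩
      refine ⟨h1.symm, ?_⟩
      rcases h2 with h2 | h2
      · exact Or.inl (fun hh => h2 hh.symm)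
      · right; rwa [Sym2.eq_swap]⟩
    loopless := ⟨fun v hv => hv.1 rfl⟩ } with hGdef
  have hGAdj : ∀ u v, G.Adj u v ↔ (u ≠ v ∧ (u.val % ℓ ≠ v.val % ℓ ∨ f s(e u, e v) = 0)) :=
    fun u v => Iff.rfl
  -- no triangle inside W
  have noTri : ∀ x y z : Fin n, x ∈ W → x < y → y < z →
      f s(x,y) = 0 → f s(x,z) = 0 → f s(y,z) = 0 → False := by
    intro x y z hxW hxy hyz h1 h2 h3
    have hxB : x ∈ B := mem_image.mpr ⟨(x, y, z),
      mem_filter.mpr ⟨mem_filter.mpr ⟨mem_univ _, hxy, hyz⟩, h1, h2, h3⟩, rfl⟩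
    exact (mem_sdiff.mp hxW).2 hxB
  have fsymm : ∀ a b : Fin n, f s(a,b) = 0 → f s(b,a) = 0 := by
    intro a b h; rwa [Sym2.eq_swap]
  have noTri' : ∀ x y z : Fin n, x ∈ W → y ∈ W → z ∈ W → x ≠ y → x ≠ z → y ≠ z →
      f s(x,y) = 0 → f s(x,z) = 0 → f s(y,z) = 0 → False := by
    intro x y z hx hy hz hxy hxz hyz h1 h2 h3
    rcases lt_trichotomy x y with hab | hab | hab
    · rcases lt_trichotomy y z with hbc | hbc | hbc
      · exact noTri x y z hx hab hbc h1 h2 h3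
      · exact hyz hbc
      · rcases lt_trichotomy x z with hac | hac | hac
        · exact noTri x z y hx hac hbc h2 h1 (fsymm y z h3)
        · exact hxz hac
        · exact noTri z x y hz hac hab (fsymm x z h2) (fsymm y z h3) h1
    · exact hxy hab
    · rcases lt_trichotomy x z with hac | hac | hac
      · exact noTri y x z hy hab hac (fsymm x y h1) h3 h2
      · exact hxz hac
      · rcases lt_trichotomy y z with hbc | hbc | hbc
        · exact noTri y z x hy hbc hac h3 (fsymm x y h1) (fsymm x z h2)
        · exact hyz hbc
        · exact noTri z y x hz hbc hab (fsymm y z h3) (fsymm x z h2) (fsymm x y h1)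
  refine ⟨G, ?_, ?_, ?_⟩
  · -- CliqueFree
    intro S hS
    have hcard : S.card = 2 * ℓ + 1 := hS.2
    have hmap : ∀ v ∈ S, v.val % ℓ ∈ Finset.range ℓ :=
      fun v _ => mem_range.mpr (Nat.mod_lt _ (by omega))
    obtain ⟨i, _, hi⟩ := exists_lt_card_fiber_of_mul_lt_card_of_maps_to (n := 2) hmap
      (by rw [card_range, hcard]; omega)
    obtain ⟨T, hTsub, hT3⟩ := exists_subset_card_eq (show 3 ≤ (S.filter (fun v => v.val % ℓ = i)).card by omega)
    obtain ⟨u, v, w, huv, huw, hvw, rfl⟩ := card_eq_three.mp hT3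
    have hu := mem_filter.mp (hTsub (show u ∈ ({u,v,w} : Finset (Fin n)) by simp))
    have hv := mem_filter.mp (hTsub (show v ∈ ({u,v,w} : Finset (Fin n)) by simp))
    have hw := mem_filter.mp (hTsub (show w ∈ ({u,v,w} : Finset (Fin n)) by simp))
    have adjuv : G.Adj u v := hS.1 (mem_coe.mpr hu.1) (mem_coe.mpr hv.1) huv
    have adjuw : G.Adj u w := hS.1 (mem_coe.mpr hu.1) (mem_coe.mpr hw.1) huw
    have adjvw : G.Adj v w := hS.1 (mem_coe.mpr hv.1) (mem_coe.mpr hw.1) hvw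
    have hcuv : u.val % ℓ = v.val % ℓ := by rw [hu.2, hv.2]
    have hcuw : u.val % ℓ = w.val % ℓ := by rw [hu.2, hw.2]
    have hcvw : v.val % ℓ = w.val % ℓ := by rw [hv.2, hw.2]
    have f1 : f s(e u, e v) = 0 := ((hGAdj u v).mp adjuv).2.resolve_left (by simpa using hcuv)
    have f2 : f s(e u, e w) = 0 := ((hGAdj u w).mp adjuw).2.resolve_left (by simpa using hcuw)
    have f3 : f s(e v, e w) = 0 := ((hGAdj v w).mp adjvw).2.resolve_left (by simpa using hcvw)
    exact noTri' (e u) (e v) (e w) (heW u) (heW v) (heW w)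
      (fun hh => huv (heInj u v hcuv hh)) (fun hh => huw (heInj u w hcuw hh))
      (fun hh => hvw (heInj v w hcvw hh)) f1 f2 f3
  · -- independence
    intro S hind
    have hclass : ∀ u ∈ S, ∀ v ∈ S, u ≠ v → u.val % ℓ = v.val % ℓ ∧ f s(e u, e v) ≠ 0 := by
      intro u hu v hv huv
      have hna := hind u hu v hv huv
      rw [hGAdj] at hna
      push_neg at hna
      exact hna huv
    have hinjS : Set.InjOn e ↑S := by
      intro u hu v hv he
      by_contra hne
      exact hne (heInj u v (hclass u (mem_coe.mp hu) v (mem_coe.mp hv) hne).1 he)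
    have hYcard : (S.image e).card = S.card := card_image_of_injOn hinjS
    by_contra hc
    push_neg at hc
    have ht' : t ≤ (S.image e).card := by omega
    obtain ⟨T, hTsub, hTcard⟩ := exists_subset_card_eq ht'
    obtain ⟨a, ha, b, hb, hab, h0⟩ := hf T hTcard
    obtain ⟨u, hu, rfl⟩ := mem_image.mp (hTsub ha)
    obtain ⟨v, hv, rfl⟩ := mem_image.mp (hTsub hb)
    have huv : u ≠ v := fun hh => hab (by rw [hh])
    exact (hclass u hu v hv huv).2 h0
  · -- clique count
    have hq : ℓ * (n / ℓ) ≤ n := Nat.mul_div_le n ℓ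
    set q := n / ℓ with hqdef
    have hvertlt : ∀ (i : Fin ℓ) (a : Fin q), i.val + ℓ * a.val < n := by
      intro i a
      have h1 : i.val + ℓ * a.val < ℓ * (a.val + 1) := by
        rw [Nat.mul_succ]; exact Nat.add_lt_add_right i.isLt _ |>.trans_le (by omega)
      have h2 : ℓ * (a.val + 1) ≤ ℓ * q := Nat.mul_le_mul_left ℓ a.isLt
      omega
    set vert : ({T : Finset (Fin ℓ) // T.card = 3} × (Fin 3 → Fin q)) → Fin 3 → Fin n :=
      fun P r => ⟨(P.1.1.orderEmbOfFin P.1.2 r).val + ℓ * (P.2 r).val,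
        hvertlt (P.1.1.orderEmbOfFin P.1.2 r) (P.2 r)⟩ with hvert
    have hres : ∀ P r, (vert P r).val % ℓ = (P.1.1.orderEmbOfFin P.1.2 r).val := by
      intro P r
      show ((P.1.1.orderEmbOfFin P.1.2 r).val + ℓ * (P.2 r).val) % ℓ = _
      rw [Nat.add_mul_mod_self_left, Nat.mod_eq_of_lt (P.1.1.orderEmbOfFin P.1.2 r).isLt]
    have hvinj : ∀ P, Function.Injective (vert P) := by
      intro P r r' hrr
      have h1 : (vert P r).val % ℓ = (vert P r').val % ℓ := by rw [hrr]
      rw [hres, hres] at h1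
      exact (P.1.1.orderEmbOfFin P.1.2).injective (Fin.ext h1)
    have hresne : ∀ P (r r' : Fin 3), r ≠ r' → (vert P r).val % ℓ ≠ (vert P r').val % ℓ := by
      intro P r r' hrr
      rw [hres, hres]
      intro hh
      exact hrr ((P.1.1.orderEmbOfFin P.1.2).injective (Fin.ext hh))
    have hclique : ∀ P, G.IsNClique 3 ((univ : Finset (Fin 3)).image (vert P)) := by
      intro P
      constructor
      · intro x hx y hy hxy
        obtain ⟨r, _, rfl⟩ := mem_image.mp (mem_coe.mp hx)
        obtain ⟨r', _, rfl⟩ := mem_image.mp (mem_coe.mp hy)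
        have hrr : r ≠ r' := fun hh => hxy (by rw [hh])
        exact (hGAdj _ _).mpr ⟨hxy, Or.inl (hresne P r r' hrr)⟩
      · rw [card_image_of_injective _ (hvinj P), card_univ, Fintype.card_fin]
    -- injectivity of the map P ↦ image
    have hFinj : Function.Injective (fun P : ({T : Finset (Fin ℓ) // T.card = 3} × (Fin 3 → Fin q)) =>
        (univ : Finset (Fin 3)).image (vert P)) := by
      have himg : ∀ P : ({T : Finset (Fin ℓ) // T.card = 3} × (Fin 3 → Fin q)),
          (univ : Finset (Fin 3)).image (fun r => (P.1.1.orderEmbOfFin P.1.2 r)) = P.1.1 := by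
        intro P
        apply eq_of_subset_of_card_le
        · intro x hx
          obtain ⟨r, _, rfl⟩ := mem_image.mp hx
          exact P.1.1.orderEmbOfFin_mem P.1.2 r
        · rw [card_image_of_injective _ (P.1.1.orderEmbOfFin P.1.2).injective,
            card_univ, Fintype.card_fin, P.1.2]
      have key : ∀ Q : ({T : Finset (Fin ℓ) // T.card = 3} × (Fin 3 → Fin q)),
          ((univ : Finset (Fin 3)).image (vert Q)).image
            (fun v : Fin n => (⟨v.val % ℓ, Nat.mod_lt _ (by omega)⟩ : Fin ℓ)) = Q.1.1 := by
        intro Q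
        rw [Finset.image_image]
        have heq : ((fun v : Fin n => (⟨v.val % ℓ, Nat.mod_lt _ (by omega)⟩ : Fin ℓ)) ∘ vert Q)
            = fun r => Q.1.1.orderEmbOfFin Q.1.2 r := funext fun r => Fin.ext (hres Q r)
        rw [heq]
        exact himg Q
      rintro ⟨⟨T, hT3⟩, a⟩ ⟨⟨T', hT3'⟩, a'⟩ hPP
      simp only at hPP
      have hTT : T = T' := by
        have h1 := key ⟨⟨T, hT3⟩, a⟩
        have h2 := key ⟨⟨T', hT3'⟩, a'⟩
        simp only at h1 h2
        rw [← h1, ← h2, hPP]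
      subst hTT
      have haa : a = a' := by
        funext r
        have hmem : vert (⟨⟨T, hT3⟩, a⟩ : {T : Finset (Fin ℓ) // T.card = 3} × (Fin 3 → Fin q)) r
            ∈ (univ : Finset (Fin 3)).image (vert ⟨⟨T, hT3'⟩, a'⟩) := by
          rw [← hPP]; exact mem_image_of_mem _ (mem_univ r)
        obtain ⟨r', _, hr'⟩ := mem_image.mp hmem
        have hres2 : (vert (⟨⟨T, hT3'⟩, a'⟩ : {T : Finset (Fin ℓ) // T.card = 3} × (Fin 3 → Fin q)) r').val % ℓ
            = (vert (⟨⟨T, hT3⟩, a⟩ : {T : Finset (Fin ℓ) // T.card = 3} × (Fin 3 → Fin q)) r).val % ℓ := by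
          rw [hr']
        rw [hres ⟨⟨T, hT3'⟩, a'⟩ r', hres ⟨⟨T, hT3⟩, a⟩ r] at hres2
        have hrr : r' = r := (T.orderEmbOfFin hT3').injective (Fin.ext hres2)
        subst hrr
        have hval := congrArg Fin.val hr'
        simp only [vert] at hval
        have hiv : (T.orderEmbOfFin hT3 r').val = (T.orderEmbOfFin hT3' r').val := hres2.symm
        have hmul : ℓ * (a r').val = ℓ * (a' r').val := by omega
        exact Fin.ext (Nat.eq_of_mul_eq_mul_left (by omega) hmul)
      rw [haa]
    have hle : Nat.card ({T : Finset (Fin ℓ) // T.card = 3} × (Fin 3 → Fin q))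
        ≤ Nat.card {S : Finset (Fin n) // G.IsNClique 3 S} := by
      apply Nat.card_le_card_of_injective
        (fun P => (⟨(univ : Finset (Fin 3)).image (vert P), hclique P⟩ :
          {S : Finset (Fin n) // G.IsNClique 3 S}))
      intro P P' h
      exact hFinj (congrArg Subtype.val h)
    have hdom : Nat.card ({T : Finset (Fin ℓ) // T.card = 3} × (Fin 3 → Fin q))
        = ℓ.choose 3 * q ^ 3 := by
      rw [Nat.card_eq_fintype_card, Fintype.card_prod, Fintype.card_fun,
        Fintype.card_fin, Fintype.card_fin]
      congr 1
      rw [Fintype.card_finset_len, Fintype.card_fin]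
    calc ℓ.choose 3 * q ^ 3 = _ := hdom.symm
      _ ≤ _ := hle

set_option maxHeartbeats 1000000 in
lemma ev_clique (ℓ : ℕ) (hl : 3 ≤ ℓ) (ε : ℝ) (hε : 0 < ε) :
    ∀ᶠ n : ℕ in atTop, ((ℓ.choose 3 : ℝ)/(ℓ:ℝ)^3 - ε) * (n:ℝ)^3
      ≤ (ℓ.choose 3 : ℝ) * ((n / ℓ : ℕ) : ℝ)^3 := by
  set B := (ℓ.choose 3 : ℝ) with hB
  have hB0 : (0:ℝ) ≤ B := by positivity
  have hl0 : (0:ℝ) < (ℓ:ℝ) := by exact_mod_cast (by omega : 0 < ℓ)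
  rw [eventually_atTop]
  refine ⟨max (ℓ*ℓ) (⌈3*B/(ε*(ℓ:ℝ)^2)⌉₊ + 1), fun n hn => ?_⟩
  have hA : ℓ*ℓ ≤ n := le_trans (le_max_left _ _) hn
  have hBn : ⌈3*B/(ε*(ℓ:ℝ)^2)⌉₊ + 1 ≤ n := le_trans (le_max_right _ _) hn
  have hBR : 3*B/(ε*(ℓ:ℝ)^2) ≤ (n:ℝ) := by
    calc 3*B/(ε*(ℓ:ℝ)^2) ≤ (⌈3*B/(ε*(ℓ:ℝ)^2)⌉₊ : ℝ) := Nat.le_ceil _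
      _ ≤ (n:ℝ) := by exact_mod_cast le_trans (Nat.le_succ _) hBn
  have h3B : 3*B ≤ ε*(ℓ:ℝ)^2*(n:ℝ) := by
    rw [div_le_iff₀ (by positivity)] at hBR
    linarith
  set q := n / ℓ with hq
  have hq1 : (q:ℝ) * (ℓ:ℝ) ≤ (n:ℝ) := by exact_mod_cast Nat.div_mul_le_self n ℓ
  have hq2 : (n:ℝ) < (ℓ:ℝ) * ((q:ℝ) + 1) := by
    exact_mod_cast Nat.lt_mul_div_succ n (by omega : 0 < ℓ)
  have hqnn : (0:ℝ) ≤ (q:ℝ) := Nat.cast_nonneg q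
  have hnl : (ℓ:ℝ) * (ℓ:ℝ) ≤ (n:ℝ) := by exact_mod_cast hA
  have hnn : (0:ℝ) ≤ (n:ℝ) := Nat.cast_nonneg n
  have hlR : (3:ℝ) ≤ (ℓ:ℝ) := by exact_mod_cast hl
  have hln : (ℓ:ℝ) ≤ (n:ℝ) := by nlinarith
  -- (n - ℓ) ≤ ℓ q and 0 ≤ n - ℓ
  have hkey : (n:ℝ) - (ℓ:ℝ) ≤ (ℓ:ℝ) * (q:ℝ) := by nlinarith
  have hnl2 : (0:ℝ) ≤ (n:ℝ) - (ℓ:ℝ) := by linarith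
  have hcube : ((n:ℝ) - (ℓ:ℝ))^3 ≤ ((ℓ:ℝ) * (q:ℝ))^3 := by
    apply pow_le_pow_left₀ hnl2 hkey
  have hstep : (B/(ℓ:ℝ)^3 - ε) * (n:ℝ)^3 ≤ B/(ℓ:ℝ)^3 * ((n:ℝ) - (ℓ:ℝ))^3 := by
    have hexp : (n:ℝ)^3 - ((n:ℝ)-(ℓ:ℝ))^3 = 3*(n:ℝ)^2*(ℓ:ℝ) - 3*(n:ℝ)*(ℓ:ℝ)^2 + (ℓ:ℝ)^3 := by ring
    have hb1 : B/(ℓ:ℝ)^3 * ((n:ℝ)^3 - ((n:ℝ)-(ℓ:ℝ))^3) ≤ ε * (n:ℝ)^3 := by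
      rw [hexp]
      rw [div_mul_eq_mul_div, div_le_iff₀ (by positivity)]
      have h1 : 3*(n:ℝ)^2*(ℓ:ℝ) - 3*(n:ℝ)*(ℓ:ℝ)^2 + (ℓ:ℝ)^3 ≤ 3*(n:ℝ)^2*(ℓ:ℝ) := by nlinarith [hln, hlR, hnn]
      have hm := mul_le_mul_of_nonneg_right h3B (by positivity : (0:ℝ) ≤ (n:ℝ)^2 * (ℓ:ℝ))
      have h2 : B * (3*(n:ℝ)^2*(ℓ:ℝ)) ≤ ε * (n:ℝ)^3 * (ℓ:ℝ)^3 := by nlinarith [hm]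
      have h3 := mul_le_mul_of_nonneg_left h1 hB0
      linarith
    have hD : (0:ℝ) ≤ B/(ℓ:ℝ)^3 := div_nonneg hB0 (by positivity)
    nlinarith [hb1]
  calc (B/(ℓ:ℝ)^3 - ε) * (n:ℝ)^3 ≤ B/(ℓ:ℝ)^3 * ((n:ℝ) - (ℓ:ℝ))^3 := hstep
    _ ≤ B/(ℓ:ℝ)^3 * ((ℓ:ℝ) * (q:ℝ))^3 := by
        apply mul_le_mul_of_nonneg_left hcube (by positivity)
    _ = B * (q:ℝ)^3 := by field_simp

end RT16

open RT16 Filter in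
theorem statement_16 (ℓ : ℕ) (hℓ : 3 ≤ ℓ) (ε : ℝ) (hε : 0 < ε) (C : ℝ) (hC : 0 < C) :
    ∃ n0 : ℕ, ∀ n : ℕ, n0 ≤ n → ∃ G : SimpleGraph (Fin n),
      G.CliqueFree (2 * ℓ + 1) ∧
      indepLE G ((n : ℝ) * (2 : ℝ) ^ (-(C * Real.logb 2 n ^ ((ℓ : ℝ) / ((ℓ : ℝ) + 1))))) ∧
      ((ℓ.choose 3 : ℝ) / (ℓ : ℝ) ^ 3 - ε) * (n : ℝ) ^ 3 ≤ (cliqueCount G 3 : ℝ) := by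
  have hEv := (ev_tt.and ((ev_indep ℓ hℓ C hC).and (ev_clique ℓ hℓ ε hε))).and
    (eventually_ge_atTop 6)
  obtain ⟨n0, hn0⟩ := eventually_atTop.mp hEv
  refine ⟨n0, fun n hn => ?_⟩
  obtain ⟨⟨htt, hind, hcl⟩, hn6⟩ := hn0 n hn
  have hn1 : 1 ≤ n := by omega
  haveI : NeZero (kk n) := ⟨(kk_pos hn1).ne'⟩
  have hnR1 : (1:ℝ) ≤ (n:ℝ) := by exact_mod_cast hn1
  have hnpos : (0:ℝ) < (n:ℝ) := by linarith
  have h34n : (n:ℝ)^((3:ℝ)/4) ≤ (n:ℝ) := by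
    calc (n:ℝ)^((3:ℝ)/4) ≤ (n:ℝ)^(1:ℝ) :=
          Real.rpow_le_rpow_of_exponent_le hnR1 (by norm_num)
      _ = (n:ℝ) := Real.rpow_one _
  have httn : tt n ≤ n := by
    have : (tt n : ℝ) ≤ (n:ℝ) := le_trans htt h34n
    exact_mod_cast this
  obtain ⟨f, hT, hf⟩ := exists_good n (kk n) (tt n) (by omega) httn kk_cube (h2_holds hn1)
  obtain ⟨G, hG1, hG2, hG3⟩ := build ℓ n (kk n) (tt n) hℓ hn6 f hT hf
  refine ⟨G, hG1, ?_, ?_⟩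
  · intro S hS
    have h1 : S.card ≤ tt n := hG2 S hS
    calc (S.card : ℝ) ≤ (tt n : ℝ) := by exact_mod_cast h1
      _ ≤ (n:ℝ)^((3:ℝ)/4) := htt
      _ ≤ (n:ℝ) * (2:ℝ) ^ (-(C * Real.logb 2 n ^ ((ℓ:ℝ)/((ℓ:ℝ)+1)))) := hind
  · calc ((ℓ.choose 3 : ℝ)/(ℓ:ℝ)^3 - ε) * (n:ℝ)^3
        ≤ (ℓ.choose 3 : ℝ) * ((n / ℓ : ℕ) : ℝ)^3 := hcl
      _ = ((ℓ.choose 3 * (n/ℓ)^3 : ℕ) : ℝ) := by push_cast; ring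
      _ ≤ (cliqueCount G 3 : ℝ) := by exact_mod_cast hG3
end

section
/- For every integer s ≥ 2 and every ε > 0 there exist γ > 0 and n_0 such that for every n ≥ n_0, every simple graph G on n vertices that contains no K_(s+1) and has independence number α(G) ≤ γ·n satisfies k_s(G) ≤ ε·n^s. -/
open Finset

open scoped Classical in
noncomputable def cc {n : ℕ} (G : SimpleGraph (Fin n)) (s : ℕ) (A : Finset (Fin n)) : ℕ :=
  (A.powerset.filter (fun S => G.IsNClique s S)).card

open scoped Classical in
lemma cc_step {n : ℕ} (G : SimpleGraph (Fin n)) (A : Finset (Fin n)) (t : ℕ) :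
    cc G (t+1) A ≤ ∑ v ∈ A, cc G t (A ∩ G.neighborFinset v) := by
  classical
  have hsub : A.powerset.filter (fun S => G.IsNClique (t+1) S) ⊆
      A.biUnion (fun v => ((A ∩ G.neighborFinset v).powerset.filter
        (fun T => G.IsNClique t T)).image (insert v)) := by
    intro S hS
    simp only [mem_filter, mem_powerset] at hS
    obtain ⟨hSA, hclq⟩ := hS
    have hne : S.Nonempty := by
      rw [← Finset.card_pos, hclq.card_eq]; omega
    set v := S.min' hne with hv
    have hvS : v ∈ S := S.min'_mem hne
    refine mem_biUnion.2 ⟨v, hSA hvS, ?_⟩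
    refine mem_image.2 ⟨S.erase v, ?_, Finset.insert_erase hvS⟩
    refine mem_filter.2 ⟨mem_powerset.2 ?_, ?_, ?_⟩
    · intro u hu
      have huS := Finset.mem_of_mem_erase hu
      refine mem_inter.2 ⟨hSA huS, ?_⟩
      rw [SimpleGraph.mem_neighborFinset]
      exact hclq.1 hvS huS (Finset.ne_of_mem_erase hu).symm
    · exact hclq.1.subset (Finset.erase_subset _ _)
    · rw [Finset.card_erase_of_mem hvS, hclq.card_eq]; omega
  calc cc G (t+1) A ≤ (A.biUnion (fun v => ((A ∩ G.neighborFinset v).powerset.filter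
        (fun T => G.IsNClique t T)).image (insert v))).card := by
        unfold cc; exact card_le_card hsub
    _ ≤ ∑ v ∈ A, (((A ∩ G.neighborFinset v).powerset.filter
        (fun T => G.IsNClique t T)).image (insert v)).card := card_biUnion_le
    _ ≤ ∑ v ∈ A, cc G t (A ∩ G.neighborFinset v) := by
        refine sum_le_sum fun v _ => ?_
        unfold cc; exact card_image_le

lemma main_bound (ε : ℝ) (hε : 0 < ε) :
    ∀ s : ℕ, 1 ≤ s → ∀ N n : ℕ, n ≤ N → ∀ G : SimpleGraph (Fin n), ∀ A : Finset (Fin n),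
    (∀ S : Finset (Fin n), S ⊆ A → ¬ G.IsNClique (s+1) S) →
    (∀ S : Finset (Fin n), S ⊆ A →
      (∀ u ∈ S, ∀ v ∈ S, u ≠ v → ¬ G.Adj u v) → (S.card : ℝ) ≤ ε * N) →
    (cc G s A : ℝ) ≤ ε * (N : ℝ) ^ s := by
  classical
  intro s
  induction s with
  | zero => omega
  | succ t ih =>
    intro _ N n hnN G A hfree hind
    rcases Nat.eq_zero_or_pos t with ht0 | htpos
    · -- base case s = 1
      subst ht0
      have hAind : ∀ u ∈ A, ∀ v ∈ A, u ≠ v → ¬ G.Adj u v := by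
        intro u hu v hv huv hadj
        refine hfree {u, v} ?_ ?_
        · intro x hx
          rcases Finset.mem_insert.1 hx with rfl | hx
          · exact hu
          · rcases Finset.mem_singleton.1 hx with rfl; exact hv
        · constructor
          · intro x hx y hy hxy
            simp only [Finset.coe_insert, Set.mem_insert_iff, Finset.coe_singleton,
              Set.mem_singleton_iff] at hx hy
            rcases hx with rfl | rfl <;> rcases hy with rfl | rfl
            · exact absurd rfl hxy
            · exact hadj
            · exact hadj.symm
            · exact absurd rfl hxy
          · rw [Finset.card_insert_of_notMem (by simp [huv]), Finset.card_singleton]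
      have hAcard : (A.card : ℝ) ≤ ε * N := hind A (Finset.Subset.refl _) hAind
      have hcc : cc G 1 A ≤ A.card := by
        unfold cc
        have : A.powerset.filter (fun S => G.IsNClique 1 S) ⊆ A.image (fun a => {a}) := by
          intro S hS
          simp only [mem_filter, mem_powerset] at hS
          obtain ⟨hSA, hclq⟩ := hS
          obtain ⟨a, rfl⟩ := Finset.card_eq_one.1 hclq.card_eq
          exact mem_image.2 ⟨a, hSA (Finset.mem_singleton_self a), rfl⟩
        calc _ ≤ (A.image (fun a => ({a} : Finset (Fin n)))).card := card_le_card this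
          _ ≤ A.card := card_image_le
      calc (cc G 1 A : ℝ) ≤ (A.card : ℝ) := by exact_mod_cast hcc
        _ ≤ ε * N := hAcard
        _ = ε * (N : ℝ) ^ 1 := by ring
    · -- inductive step
      have h1 : (cc G (t+1) A : ℝ) ≤ ∑ v ∈ A, (cc G t (A ∩ G.neighborFinset v) : ℝ) := by
        exact_mod_cast cc_step G A t
      have h2 : ∀ v ∈ A, (cc G t (A ∩ G.neighborFinset v) : ℝ) ≤ ε * (N : ℝ) ^ t := by
        intro v hv
        refine ih htpos N n hnN G (A ∩ G.neighborFinset v) ?_ ?_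
        · intro S hS hclq
          have hvS : v ∉ S := by
            intro hvS
            have := hS hvS
            rw [mem_inter, SimpleGraph.mem_neighborFinset] at this
            exact G.loopless.irrefl v this.2
          refine hfree (insert v S) ?_ ?_
          · intro x hx
            rcases Finset.mem_insert.1 hx with rfl | hx
            · exact hv
            · exact (mem_inter.1 (hS hx)).1
          · constructor
            · intro x hx y hy hxy
              simp only [Finset.coe_insert, Set.mem_insert_iff, Finset.mem_coe] at hx hy
              rcases hx with rfl | hx <;> rcases hy with rfl | hy
              · exact absurd rfl hxy
              · exact (SimpleGraph.mem_neighborFinset G x y).1 (mem_inter.1 (hS hy)).2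
              · exact ((SimpleGraph.mem_neighborFinset G y x).1 (mem_inter.1 (hS hx)).2).symm
              · exact hclq.1 hx hy hxy
            · rw [Finset.card_insert_of_notMem hvS, hclq.card_eq]
        · intro S hS hSind
          exact hind S (fun x hx => (mem_inter.1 (hS hx)).1) hSind
      have h3 : ∑ v ∈ A, (cc G t (A ∩ G.neighborFinset v) : ℝ) ≤ (A.card : ℝ) * (ε * (N:ℝ)^t) := by
        calc _ ≤ ∑ _v ∈ A, ε * (N:ℝ)^t := Finset.sum_le_sum h2
          _ = (A.card : ℝ) * (ε * (N:ℝ)^t) := by rw [Finset.sum_const, nsmul_eq_mul]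
      have hA : (A.card : ℝ) ≤ (N : ℝ) := by
        have h := Finset.card_le_univ A
        have : A.card ≤ n := by simpa using h
        exact_mod_cast this.trans hnN
      have hNt : (0:ℝ) ≤ ε * (N:ℝ)^t := by positivity
      calc (cc G (t+1) A : ℝ) ≤ (A.card : ℝ) * (ε * (N:ℝ)^t) := h1.trans h3
        _ ≤ (N : ℝ) * (ε * (N:ℝ)^t) := mul_le_mul_of_nonneg_right hA hNt
        _ = ε * (N:ℝ)^(t+1) := by ring

lemma cliqueCount_eq_cc {n : ℕ} (G : SimpleGraph (Fin n)) (s : ℕ) :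
    cliqueCount G s = cc G s Finset.univ := by
  classical
  unfold cliqueCount cc
  rw [Nat.card_eq_fintype_card, Fintype.card_subtype, Finset.powerset_univ]

theorem statement_18 (s : ℕ) (hs : 2 ≤ s) (ε : ℝ) (hε : 0 < ε) :
    ∃ γ : ℝ, 0 < γ ∧ ∃ n0 : ℕ, ∀ n : ℕ, n0 ≤ n → ∀ G : SimpleGraph (Fin n),
      G.CliqueFree (s + 1) → indepLE G (γ * n) →
      (cliqueCount G s : ℝ) ≤ ε * (n : ℝ) ^ s := by
  refine ⟨ε, hε, 0, fun n _ G hfree hind => ?_⟩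
  rw [cliqueCount_eq_cc]
  have h1 : 1 ≤ s := by omega
  obtain ⟨t, rfl⟩ : ∃ t, s = t + 1 := ⟨s - 1, by omega⟩
  refine main_bound ε hε (t+1) (by omega) n n le_rfl G Finset.univ ?_ ?_
  · intro S _ hclq
    exact hfree S hclq
  · intro S _ hS
    exact hind S hS
end
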